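/- For each pair of integers h, k with 3 ≤ h ≤ k, there exists a connected finite simple graph G with chromatic number χ(G) = h and neighbor-locating chromatic number χ_NL(G) = k. -/

import Mathlib

open SimpleGraph

/-- A coloring `c : V → Fin k` is a *neighbor-locating coloring* of `G` if it is proper and
any two distinct vertices with the same color have different sets of colors on their
open neighborhoods. -/
def IsNLColoring {V : Type*} (G : SimpleGraph V) {k : ℕ} (c : V → Fin k) : Prop :=
  (∀ u v : V, G.Adj u v → c u ≠ c v) ∧
  ∀ u v : V, u ≠ v → c u = c v → c '' (G.neighborSet u) ≠ c '' (G.neighborSet v)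

/-- The neighbor-locating chromatic number: the least `k` admitting an NL-coloring. -/
noncomputable def nlChromaticNumber {V : Type*} (G : SimpleGraph V) : ℕ :=
  sInf {k : ℕ | ∃ c : V → Fin k, IsNLColoring G c}

/-- For each pair of integers `3 ≤ h ≤ k`, there is a connected finite graph with
chromatic number `h` and neighbor-locating chromatic number `k`. -/
theorem exists_connected_graph_chromaticNumber_eq_and_nlChromaticNumber_eq
    (h k : ℕ) (hh : 3 ≤ h) (hk : h ≤ k) :
    ∃ (n : ℕ) (G : SimpleGraph (Fin n)), G.Connected ∧
      G.chromaticNumber = (h : ℕ∞) ∧ nlChromaticNumber G = k := by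
  have hk3 : 3 ≤ k := hh.trans hk
  have hkpos : 0 < k := by omega
  -- complete split graph: clique {i | i < h-1} joined to independent set {i | h-1 ≤ i}
  refine ⟨k, ⟨fun i j => i ≠ j ∧ (i.val < h - 1 ∨ j.val < h - 1), ?_, ?_⟩, ?_, ?_, ?_⟩
  · refine ⟨?_⟩; intro i j ⟨hij, hor⟩; exact ⟨hij.symm, hor.symm⟩
  · refine ⟨?_⟩; intro i ⟨hii, _⟩; exact hii rfl
  · -- connected
    have hadj0 : ∀ v : Fin k, v ≠ (⟨0, hkpos⟩ : Fin k) →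
        SimpleGraph.Adj ⟨fun i j => i ≠ j ∧ (i.val < h - 1 ∨ j.val < h - 1), by
          refine ⟨?_⟩; intro i j ⟨hij, hor⟩; exact ⟨hij.symm, hor.symm⟩, by
          refine ⟨?_⟩; intro i ⟨hii, _⟩; exact hii rfl⟩ v ⟨0, hkpos⟩ := by
      intro v hv; exact ⟨hv, Or.inr (by simp; omega)⟩
    haveI : Nonempty (Fin k) := ⟨⟨0, hkpos⟩⟩
    refine ⟨fun u v => ?_⟩
    by_cases huv : u = v
    · exact huv ▸ Reachable.refl u
    by_cases hu : u = (⟨0, hkpos⟩ : Fin k)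
    · subst hu; exact ((hadj0 v (Ne.symm huv)).symm).reachable
    by_cases hv : v = (⟨0, hkpos⟩ : Fin k)
    · subst hv; exact (hadj0 u hu).reachable
    · exact ((hadj0 u hu).reachable).trans ((hadj0 v hv).symm).reachable
  · -- chromatic number = h
    set G : SimpleGraph (Fin k) := ⟨fun i j => i ≠ j ∧ (i.val < h - 1 ∨ j.val < h - 1), by
      refine ⟨?_⟩; intro i j ⟨hij, hor⟩; exact ⟨hij.symm, hor.symm⟩, by
      refine ⟨?_⟩; intro i ⟨hii, _⟩; exact hii rfl⟩ with hG
    have hhpos : 0 < h := by omega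
    have hcol : G.Colorable h := by
      refine ⟨⟨fun i => ⟨min i.val (h - 1), by omega⟩, ?_⟩⟩
      rintro i j ⟨hij, hor⟩ hc
      have hc' := congrArg Fin.val hc
      simp only [] at hc'
      have hne : i.val ≠ j.val := fun e => hij (Fin.ext e)
      omega
    have hle : G.chromaticNumber ≤ (h : ℕ∞) := hcol.chromaticNumber_le
    have hge : (h : ℕ∞) ≤ G.chromaticNumber := by
      have hclique : G.IsClique ((Finset.univ.filter (fun i : Fin k => i.val < h)) : Finset (Fin k)) := by
        intro i hi j hj hij
        simp only [Finset.coe_filter, Set.mem_setOf_eq, Finset.mem_coe,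
          Finset.mem_univ, true_and] at hi hj
        exact ⟨hij, by omega⟩
      have hcard : (Finset.univ.filter (fun i : Fin k => i.val < h)).card = h := by
        by_cases hhk : h < k
        · have : (Finset.univ.filter (fun i : Fin k => i.val < h))
              = Finset.Iio (⟨h, hhk⟩ : Fin k) := by
            ext i; simp [Fin.lt_def]
          rw [this, Fin.card_Iio]
        · have hhk' : h = k := by omega
          have : (Finset.univ.filter (fun i : Fin k => i.val < h)) = Finset.univ := by
            ext i; simp; omega
          rw [this]; simp [hhk']
      calc (h : ℕ∞) = ((Finset.univ.filter (fun i : Fin k => i.val < h)).card : ℕ∞) := by rw [hcard]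
        _ ≤ G.chromaticNumber := hclique.card_le_chromaticNumber
    exact le_antisymm hle hge
  · -- nl chromatic number = k
    set G : SimpleGraph (Fin k) := ⟨fun i j => i ≠ j ∧ (i.val < h - 1 ∨ j.val < h - 1), by
      refine ⟨?_⟩; intro i j ⟨hij, hor⟩; exact ⟨hij.symm, hor.symm⟩, by
      refine ⟨?_⟩; intro i ⟨hii, _⟩; exact hii rfl⟩ with hG
    have hmem : k ∈ {k' : ℕ | ∃ c : Fin k → Fin k', IsNLColoring G c} := by
      refine ⟨id, ⟨fun u v hadj => hadj.1, fun u v huv hc => absurd hc huv⟩⟩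
    refine le_antisymm (Nat.sInf_le hmem) (le_csInf ⟨k, hmem⟩ ?_)
    rintro k' ⟨c, hproper, hnl⟩
    have hinj : Function.Injective c := by
      intro u v hc
      by_contra huv
      by_cases hadj : G.Adj u v
      · exact hproper u v hadj hc
      · -- both u v are twins: u.val ≥ h-1 and v.val ≥ h-1
        have hu : ¬ u.val < h - 1 := by
          intro hu'; exact hadj ⟨huv, Or.inl hu'⟩
        have hv : ¬ v.val < h - 1 := by
          intro hv'; exact hadj ⟨huv, Or.inr hv'⟩
        have hN : G.neighborSet u = G.neighborSet v := by
          ext j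
          simp only [mem_neighborSet]
          constructor
          · rintro ⟨hju, hor⟩
            rcases hor with h1 | h1
            · omega
            · exact ⟨fun he => by rw [← he] at h1; omega, Or.inr h1⟩
          · rintro ⟨hjv, hor⟩
            rcases hor with h1 | h1
            · omega
            · exact ⟨fun he => by rw [← he] at h1; omega, Or.inr h1⟩
        exact hnl u v huv hc (by rw [hN])
    simpa using Fintype.card_le_of_injective c hinj
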